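/- Held–Karp recurrence correctness: let c : Fin n → ℝ≥0 → ℝ≥0 assign to object i and elapsed time t the pick-and-place duration c i t (assumed positive). Define the cost of a picking sequence (a list of distinct objects) recursively by time(nil) = 0 and time(s ++ [i]) = time(s) + c i (time(s)). Define T(U) for each finite set U of objects by T(∅) = 0 and T(U) = min over i ∈ U of (T(U \ {i}) + c i (T(U \ {i}))). Then T(U) equals the minimum of time(s) over all permutations s of U. Note: this requires the monotonicity assumption that t ↦ t + c i t is monotone nondecreasing in t for each i. -/

import Mathlib

open scoped NNReal

/-- Total completion time of a picking sequence: time(nil) = 0 and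
time(s ++ [i]) = time(s) + c i (time(s)). -/
def seqTime {n : ℕ} (c : Fin n → ℝ≥0 → ℝ≥0) (s : List (Fin n)) : ℝ≥0 :=
  s.foldl (fun t i => t + c i t) 0

/-- Held–Karp recurrence correctness: if `c i t > 0` for all `i, t`,
each completion map `t ↦ t + c i t` is monotone, and `T` satisfies the
Held–Karp recurrence `T ∅ = 0`,
`T U = min_{i ∈ U} (T (U \ {i}) + c i (T (U \ {i})))`, then `T U` is the minimum
of `time(s)` over all permutations `s` of `U` (sequences of distinct elements
whose underlying set is `U`). -/
theorem heldKarp_correct {n : ℕ} (c : Fin n → ℝ≥0 → ℝ≥0)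
    (hpos : ∀ i t, 0 < c i t)
    (hmono : ∀ i, Monotone fun t => t + c i t)
    (T : Finset (Fin n) → ℝ≥0)
    (hT0 : T ∅ = 0)
    (hTrec : ∀ (U : Finset (Fin n)) (hU : U.Nonempty),
      T U = U.inf' hU fun i => T (U.erase i) + c i (T (U.erase i))) :
    ∀ U : Finset (Fin n),
      IsLeast {t : ℝ≥0 | ∃ s : List (Fin n), s.Nodup ∧ s.toFinset = U ∧ t = seqTime c s}
        (T U) := by
  have hconcat : ∀ (s : List (Fin n)) (i : Fin n),
      seqTime c (s ++ [i]) = seqTime c s + c i (seqTime c s) := by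
    intro s i
    simp [seqTime, List.foldl_append]
  intro U
  induction U using Finset.strongInduction with
  | _ U ih =>
    rcases U.eq_empty_or_nonempty with rfl | hU
    · constructor
      · exact ⟨[], by simp [seqTime, hT0]⟩
      · rintro t ⟨s, hnd, hts, rfl⟩
        have : s = [] := by simpa using hts
        simp [this, seqTime, hT0]
    · constructor
      · -- membership
        obtain ⟨i, hi, hieq⟩ := Finset.exists_mem_eq_inf' hU
          (fun i => T (U.erase i) + c i (T (U.erase i)))
        obtain ⟨⟨s, hnd, hts, hst⟩, -⟩ := ih (U.erase i) (Finset.erase_ssubset hi)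
        refine ⟨s ++ [i], ?_, ?_, ?_⟩
        · have : i ∉ s := by
            intro h
            have : i ∈ U.erase i := hts ▸ List.mem_toFinset.mpr h
            simp at this
          simp [List.nodup_append, hnd, this]; rintro a ha rfl; exact this ha
        · rw [List.toFinset_append, hts]
          simp only [List.toFinset_cons, List.toFinset_nil, LawfulSingleton.insert_empty_eq]
          ext x
          simp only [Finset.mem_union, Finset.mem_singleton, Finset.mem_erase]
          constructor
          · rintro (⟨-, hx⟩ | rfl); exacts [hx, hi]
          · intro hx
            rcases eq_or_ne x i with rfl | hxi
            · exact Or.inr rfl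
            · exact Or.inl ⟨hxi, hx⟩
        · rw [hconcat, ← hst, hTrec U hU, hieq]
      · -- lower bound
        rintro t ⟨s, hnd, hts, rfl⟩
        have hsne : s ≠ [] := by
          rintro rfl
          simp at hts
          exact hU.ne_empty hts.symm
        obtain ⟨s', i, rfl⟩ := (List.eq_nil_or_concat s).resolve_left hsne
        rw [List.concat_eq_append] at *
        have hinotmem : i ∉ s' := by
          have := hnd
          simp [List.nodup_append] at this
          exact fun h => this.2 i h rfl
        have hiU : i ∈ U := by
          rw [← hts]; simp
        have hts' : s'.toFinset = U.erase i := by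
          rw [← hts]
          ext x
          simp [List.mem_toFinset, and_or_left]
          intro hx hxi
          exact absurd (hxi ▸ hx) hinotmem
        have hle : T (U.erase i) ≤ seqTime c s' :=
          (ih (U.erase i) (Finset.erase_ssubset hiU)).2 ⟨s', (List.nodup_append.mp hnd).1, hts', rfl⟩
        calc T U ≤ T (U.erase i) + c i (T (U.erase i)) := by
              rw [hTrec U hU]; exact Finset.inf'_le _ hiU
          _ ≤ seqTime c s' + c i (seqTime c s') := hmono i hle
          _ = seqTime c (s' ++ [i]) := (hconcat s' i).symm
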